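/- Let Δ and Δ' be two complete fans in R^2. Then there exists a complete fan Δ'' refining both Δ and Δ', and Δ'' may be chosen regular. -/

import Mathlib

/-- The closed rational sector in ℝ² generated by `u, v ∈ ℤ²`. -/
def secR (u v : ℤ × ℤ) : Set (ℝ × ℝ) :=
  {x | ∃ s t : ℝ, 0 ≤ s ∧ 0 ≤ t ∧
    x.1 = s * (u.1 : ℝ) + t * (v.1 : ℝ) ∧ x.2 = s * (u.2 : ℝ) + t * (v.2 : ℝ)}

/-- A complete fan in ℝ², given by `d ≥ 1` primitive rays `v 0, …, v d = v 0` in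
counterclockwise order whose consecutive sectors cover ℝ². -/
def IsCompleteFan (d : ℕ) (v : ℕ → ℤ × ℤ) : Prop :=
  1 ≤ d ∧ v d = v 0 ∧
  (∀ i ≤ d, IsCoprime (v i).1 (v i).2) ∧
  (∀ i < d, 0 < (v i).1 * (v (i+1)).2 - (v i).2 * (v (i+1)).1) ∧
  (⋃ i ∈ Finset.range d, secR (v i) (v (i+1))) = Set.univ

/-- Fan `(d', v')` refines fan `(d, v)`: every sector of the first is contained in a
sector of the second. -/
def FanRefines (d' : ℕ) (v' : ℕ → ℤ × ℤ) (d : ℕ) (v : ℕ → ℤ × ℤ) : Prop :=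
  ∀ i < d', ∃ j < d, secR (v' i) (v' (i+1)) ⊆ secR (v j) (v (j+1))

/-- integer determinant -/
def dt (u v : ℤ × ℤ) : ℤ := u.1 * v.2 - u.2 * v.1

lemma plucker (a b c d : ℤ × ℤ) :
    dt a b * dt c d = dt a c * dt b d - dt a d * dt b c := by
  simp only [dt]; ring

/-- membership in a sector via determinants (real version) -/
lemma mem_secR {u v : ℤ × ℤ} (h : 0 < dt u v) (x : ℝ × ℝ) :
    x ∈ secR u v ↔ 0 ≤ (u.1 : ℝ) * x.2 - (u.2 : ℝ) * x.1 ∧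
      0 ≤ x.1 * (v.2 : ℝ) - x.2 * (v.1 : ℝ) := by
  have hD : (0:ℝ) < (u.1 : ℝ) * v.2 - (u.2 : ℝ) * v.1 := by
    have := h; rw [dt] at this; exact_mod_cast this
  constructor
  · rintro ⟨s, t, hs, ht, hx1, hx2⟩
    constructor
    · have : (u.1 : ℝ) * x.2 - (u.2 : ℝ) * x.1 = t * ((u.1:ℝ) * v.2 - (u.2:ℝ) * v.1) := by
        rw [hx1, hx2]; ring
      rw [this]; positivity
    · have : x.1 * (v.2 : ℝ) - x.2 * (v.1 : ℝ) = s * ((u.1:ℝ) * v.2 - (u.2:ℝ) * v.1) := by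
        rw [hx1, hx2]; ring
      rw [this]; positivity
  · rintro ⟨h1, h2⟩
    refine ⟨(x.1 * (v.2 : ℝ) - x.2 * (v.1 : ℝ)) / ((u.1:ℝ) * v.2 - (u.2:ℝ) * v.1),
      ((u.1 : ℝ) * x.2 - (u.2 : ℝ) * x.1) / ((u.1:ℝ) * v.2 - (u.2:ℝ) * v.1),
      div_nonneg h2 hD.le, div_nonneg h1 hD.le, ?_, ?_⟩ <;>
    · rw [div_mul_eq_mul_div, div_mul_eq_mul_div, ← add_div, eq_div_iff hD.ne']
      ring

/-- cast an integer vector to a real point -/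
def toR (u : ℤ × ℤ) : ℝ × ℝ := ((u.1 : ℝ), (u.2 : ℝ))

lemma int_mem_secR {u v a : ℤ × ℤ} (h : 0 < dt u v) :
    toR a ∈ secR u v ↔ 0 ≤ dt u a ∧ 0 ≤ dt a v := by
  rw [mem_secR h]
  simp only [toR, dt]
  constructor <;> rintro ⟨h1, h2⟩ <;> exact ⟨by exact_mod_cast h1, by exact_mod_cast h2⟩

/-- a sector is closed under taking subsectors generated by its members -/
lemma secR_subset {w z u v : ℤ × ℤ} (hu : toR u ∈ secR w z) (hv : toR v ∈ secR w z) :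
    secR u v ⊆ secR w z := by
  obtain ⟨a, b, ha, hb, hu1, hu2⟩ := hu
  obtain ⟨c, d, hc, hd, hv1, hv2⟩ := hv
  rintro x ⟨s, t, hs, ht, hx1, hx2⟩
  refine ⟨s * a + t * c, s * b + t * d, by positivity, by positivity, ?_, ?_⟩
  · rw [hx1]; simp only [toR] at hu1 hv1; rw [hu1, hv1]; ring
  · rw [hx2]; simp only [toR] at hu2 hv2; rw [hu2, hv2]; ring

lemma secR_split {u v w : ℤ × ℤ} (huw : 0 < dt u w) (hwv : 0 < dt w v)
    (huv : 0 < dt u v) : secR u v ⊆ secR u w ∪ secR w v := by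
  intro x hx
  rw [mem_secR huv] at hx
  by_cases hwx : 0 ≤ (w.1 : ℝ) * x.2 - (w.2 : ℝ) * x.1
  · right; rw [mem_secR hwv]; exact ⟨hwx, hx.2⟩
  · left; rw [mem_secR huw]
    exact ⟨hx.1, by linarith [hwx]⟩

lemma pqrs_core {p q r s : ℤ} (hc : 0 < q * r - p * s) (h1 : 0 ≤ p + q)
    (h2 : 0 ≤ r + s) (h3 : 0 ≤ p ∨ q ≤ 0) (h4 : r ≤ 0 ∨ 0 ≤ s) :
    0 ≤ p ∧ 0 ≤ q ∧ 0 ≤ r ∧ 0 ≤ s := by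
  have hp : 0 ≤ p := by
    rcases h3 with h | h
    · exact h
    · nlinarith
  have hq : 0 ≤ q := by
    by_contra hq
    push_neg at hq
    rcases h4 with h | h
    · nlinarith
    · nlinarith
  have hr : 0 ≤ r := by nlinarith
  have hs : 0 ≤ s := by
    rcases h4 with h | h
    · nlinarith
    · exact h
  exact ⟨hp, hq, hr, hs⟩

/-- if `w` is strictly inside `[u,v]` and `a` strictly inside `[u,w]`, then
`a` is strictly inside `[u,v]` (second half). -/
lemma inside_left {u v w a : ℤ × ℤ} (huv : 0 < dt u v) (huw : 0 < dt u w)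
    (hwv : 0 < dt w v) (h1 : 0 < dt u a) (h2 : 0 < dt a w) : 0 < dt a v := by
  have key : dt u w * dt a v = dt u a * dt w v + dt u v * dt a w := by
    simp only [dt]; ring
  nlinarith

lemma inside_right {u v w a : ℤ × ℤ} (huv : 0 < dt u v) (huw : 0 < dt u w)
    (hwv : 0 < dt w v) (h1 : 0 < dt w a) (h2 : 0 < dt a v) : 0 < dt u a := by
  have key : dt w v * dt u a = dt u v * dt w a + dt u w * dt a v := by
    simp only [dt]; ring
  nlinarith

/-- if coprime vectors are parallel, one is an integer multiple of the other -/
lemma parallel_scal {w v : ℤ × ℤ} (hw : IsCoprime w.1 w.2) (h : dt w v = 0) :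
    ∃ c : ℤ, v.1 = c * w.1 ∧ v.2 = c * w.2 := by
  obtain ⟨a, b, hab⟩ := hw
  refine ⟨a * v.1 + b * v.2, ?_, ?_⟩
  · simp only [dt] at h; linear_combination (-v.1) * hab - b * h
  · simp only [dt] at h; linear_combination (-v.2) * hab + a * h

lemma coprime_of_dt_one {u w : ℤ × ℤ} (h : dt u w = 1) : IsCoprime u.1 u.2 := by
  exact ⟨w.2, -w.1, by simp only [dt] at h; linarith⟩

lemma coprime_of_dt_one' {u w : ℤ × ℤ} (h : dt u w = 1) : IsCoprime w.1 w.2 := by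
  exact ⟨-u.2, u.1, by simp only [dt] at h; linarith⟩

/-- the mediant insertion for the regular subdivision -/
lemma exists_mediant {u v : ℤ × ℤ} (hu : IsCoprime u.1 u.2) (hv : IsCoprime v.1 v.2)
    (h2 : 2 ≤ dt u v) : ∃ w : ℤ × ℤ, dt u w = 1 ∧ 0 < dt w v ∧ dt w v < dt u v := by
  obtain ⟨a, b, hab⟩ := hu
  obtain ⟨w, hw⟩ : ∃ w : ℤ × ℤ,
      w = (-b + (-(dt (-b, a) v / dt u v)) * u.1, a + (-(dt (-b, a) v / dt u v)) * u.2) :=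
    ⟨_, rfl⟩
  have hduw : dt u w = 1 := by
    rw [hw]; simp only [dt]; ring_nf
    linear_combination hab
  have hdwv : dt w v = dt (-b, a) v % dt u v := by
    rw [Int.emod_def, hw]; simp only [dt]; ring
  have hδpos : (0:ℤ) < dt u v := by linarith
  have hnn : 0 ≤ dt w v := by rw [hdwv]; exact Int.emod_nonneg _ (by omega)
  have hlt : dt w v < dt u v := by rw [hdwv]; exact Int.emod_lt_of_pos _ hδpos
  refine ⟨w, hduw, ?_, hlt⟩
  rcases hnn.lt_or_eq with h | h
  · exact h
  · exfalso
    have hwcop : IsCoprime w.1 w.2 := coprime_of_dt_one' hduw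
    obtain ⟨c, hc1, hc2⟩ := parallel_scal hwcop h.symm
    have hδc : dt u v = c * dt u w := by
      simp only [dt, hc1, hc2]; ring
    rw [hduw, mul_one] at hδc
    have hcu : IsUnit c := by
      obtain ⟨x, y, hxy⟩ := hv
      rw [hc1, hc2] at hxy
      exact IsUnit.of_mul_eq_one (a := c) (x * w.1 + y * w.2) (by linarith)
    rcases Int.isUnit_iff.mp hcu with h' | h' <;> omega

/-- concatenation of two chains -/
def cc (m₁ : ℕ) (c₁ c₂ : ℕ → ℤ × ℤ) (j : ℕ) : ℤ × ℤ :=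
  if j < m₁ then c₁ j else c₂ (j - m₁)

lemma cc_left {m₁ : ℕ} {c₁ c₂ : ℕ → ℤ × ℤ} (hbd : c₁ m₁ = c₂ 0) {j : ℕ} (hj : j < m₁) :
    cc m₁ c₁ c₂ j = c₁ j ∧ cc m₁ c₁ c₂ (j+1) = c₁ (j+1) := by
  constructor
  · simp [cc, hj]
  · rcases Nat.lt_or_ge (j+1) m₁ with h | h
    · simp [cc, h]
    · have : j + 1 = m₁ := by omega
      simp [cc, this, hbd]

lemma cc_right {m₁ : ℕ} {c₁ c₂ : ℕ → ℤ × ℤ} {j : ℕ} (hj : m₁ ≤ j) :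
    cc m₁ c₁ c₂ j = c₂ (j - m₁) ∧ cc m₁ c₁ c₂ (j+1) = c₂ (j - m₁ + 1) := by
  constructor
  · simp [cc, Nat.not_lt.mpr hj]
  · have h1 : ¬ (j + 1 < m₁) := by omega
    have h2 : j + 1 - m₁ = j - m₁ + 1 := by omega
    simp [cc, h1, h2]

lemma cc_edges {Q : ℤ × ℤ → ℤ × ℤ → Prop} {m₁ m₂ : ℕ} {c₁ c₂ : ℕ → ℤ × ℤ}
    (hbd : c₁ m₁ = c₂ 0)
    (e₁ : ∀ j < m₁, Q (c₁ j) (c₁ (j+1))) (e₂ : ∀ j < m₂, Q (c₂ j) (c₂ (j+1))) :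
    ∀ j < m₁ + m₂, Q (cc m₁ c₁ c₂ j) (cc m₁ c₁ c₂ (j+1)) := by
  intro j hj
  rcases Nat.lt_or_ge j m₁ with h | h
  · obtain ⟨h1, h2⟩ := cc_left hbd h
    rw [h1, h2]; exact e₁ j h
  · obtain ⟨h1, h2⟩ := cc_right (c₁ := c₁) (c₂ := c₂) h
    rw [h1, h2]; exact e₂ (j - m₁) (by omega)

lemma cc_union_left {m₁ m₂ : ℕ} {c₁ c₂ : ℕ → ℤ × ℤ} (hbd : c₁ m₁ = c₂ 0) :
    (⋃ j ∈ Finset.range m₁, secR (c₁ j) (c₁ (j+1))) ⊆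
      ⋃ j ∈ Finset.range (m₁ + m₂), secR (cc m₁ c₁ c₂ j) (cc m₁ c₁ c₂ (j+1)) := by
  intro x hx
  simp only [Set.mem_iUnion, Finset.mem_range] at hx ⊢
  obtain ⟨j, hj, hxj⟩ := hx
  obtain ⟨h1, h2⟩ := cc_left hbd hj
  exact ⟨j, by omega, by rw [h1, h2]; exact hxj⟩

lemma cc_union_right {m₁ m₂ : ℕ} {c₁ c₂ : ℕ → ℤ × ℤ} :
    (⋃ j ∈ Finset.range m₂, secR (c₂ j) (c₂ (j+1))) ⊆
      ⋃ j ∈ Finset.range (m₁ + m₂), secR (cc m₁ c₁ c₂ j) (cc m₁ c₁ c₂ (j+1)) := by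
  intro x hx
  simp only [Set.mem_iUnion, Finset.mem_range] at hx ⊢
  obtain ⟨j, hj, hxj⟩ := hx
  obtain ⟨h1, h2⟩ := cc_right (m₁ := m₁) (c₁ := c₁) (c₂ := c₂) (j := j + m₁) (by omega)
  refine ⟨j + m₁, by omega, ?_⟩
  rw [h1, h2]
  simpa [Nat.add_sub_cancel] using hxj

lemma dt_self (u : ℤ × ℤ) : dt u u = 0 := by simp [dt]; ring

lemma mem_secR_left {u v : ℤ × ℤ} (h : 0 < dt u v) : toR u ∈ secR u v :=
  (int_mem_secR h).mpr ⟨by rw [dt_self], h.le⟩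

lemma mem_secR_right {u v : ℤ × ℤ} (h : 0 < dt u v) : toR v ∈ secR u v :=
  (int_mem_secR h).mpr ⟨h.le, by rw [dt_self]⟩

lemma secR_sub_of_inside {u v w z : ℤ × ℤ} (huv : 0 < dt u v)
    (h1 : 0 ≤ dt u w) (h2 : 0 ≤ dt w v) (h3 : 0 ≤ dt u z) (h4 : 0 ≤ dt z v) :
    secR w z ⊆ secR u v :=
  secR_subset ((int_mem_secR huv).mpr ⟨h1, h2⟩) ((int_mem_secR huv).mpr ⟨h3, h4⟩)

/-- regular subdivision of a sector with coprime generators -/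
lemma regchain : ∀ n : ℕ, ∀ u v : ℤ × ℤ, IsCoprime u.1 u.2 → IsCoprime v.1 v.2 →
    dt u v = n → 1 ≤ n →
    ∃ (m : ℕ) (c : ℕ → ℤ × ℤ), 1 ≤ m ∧ c 0 = u ∧ c m = v ∧
      (∀ j < m, dt (c j) (c (j+1)) = 1 ∧ secR (c j) (c (j+1)) ⊆ secR u v) ∧
      secR u v ⊆ ⋃ j ∈ Finset.range m, secR (c j) (c (j+1)) := by
  intro n
  induction n using Nat.strong_induction_on with
  | _ n ih =>
    intro u v hu hv hn h1
    rcases eq_or_lt_of_le h1 with h1' | h2'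
    · -- base case : dt u v = 1
      refine ⟨1, fun j => if j = 0 then u else v, le_refl 1, by simp, by simp, ?_, ?_⟩
      · intro j hj
        interval_cases j
        refine ⟨?_, ?_⟩
        · show dt u v = 1
          rw [hn, ← h1']; norm_num
        · show secR u v ⊆ secR u v
          exact subset_rfl
      · intro x hx
        simp only [Set.mem_iUnion, Finset.mem_range]
        exact ⟨0, by norm_num, by simpa using hx⟩
    · -- inductive case : dt u v ≥ 2
      have hδ : 2 ≤ dt u v := by rw [hn]; exact_mod_cast h2'
      obtain ⟨w, hduw, hdwv, hlt⟩ := exists_mediant hu hv hδ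
      have hwcop : IsCoprime w.1 w.2 := coprime_of_dt_one' hduw
      have hpos : 0 < dt u v := by linarith
      obtain ⟨m₂, c₂, hm₂, hc₂0, hc₂m, he₂, hcov₂⟩ :=
        ih (dt w v).toNat (by omega) w v hwcop hv (by omega) (by omega)
      set c₁ : ℕ → ℤ × ℤ := fun j => if j = 0 then u else w with hc₁
      have hbd : c₁ 1 = c₂ 0 := by simp [hc₁, hc₂0]
      have hsuw : secR u w ⊆ secR u v :=
        secR_sub_of_inside hpos (by rw [dt_self]) hpos.le (by omega) hdwv.le
      have hswv : secR w v ⊆ secR u v :=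
        secR_sub_of_inside hpos (by omega) hdwv.le hpos.le (by rw [dt_self])
      refine ⟨1 + m₂, cc 1 c₁ c₂, by omega, ?_, ?_, ?_, ?_⟩
      · simp [cc, hc₁]
      · have : ¬ (1 + m₂ < 1) := by omega
        simp only [cc, if_neg this, Nat.add_sub_cancel_left, hc₂m]
      · refine cc_edges (Q := fun a b => dt a b = 1 ∧ secR a b ⊆ secR u v) hbd ?_ ?_
        · intro j hj
          interval_cases j
          simp only [hc₁, if_pos rfl, if_neg one_ne_zero]
          exact ⟨hduw, hsuw⟩
        · intro j hj
          obtain ⟨hd, hs⟩ := he₂ j hj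
          exact ⟨hd, hs.trans hswv⟩
      · intro x hx
        rcases secR_split (by omega) hdwv hpos hx with h | h
        · refine cc_union_left (m₂ := m₂) hbd ?_
          simp only [Set.mem_iUnion, Finset.mem_range]
          refine ⟨0, by norm_num, ?_⟩
          have e0 : c₁ 0 = u := by simp [hc₁]
          have e1 : c₁ 1 = w := by simp [hc₁]
          rw [e0, e1]; exact h
        · exact cc_union_right (m₁ := 1) (hcov₂ h)

lemma dt_swap (u v : ℤ × ℤ) : dt v u = -dt u v := by simp [dt]; ring

/-- a sector with no ray of `[a,b]` strictly inside it, whose "center" lies in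
`[a,b]`, is contained in `[a,b]` -/
lemma sector_in_sector {u v a b : ℤ × ℤ} (huv : 0 < dt u v) (hab : 0 < dt a b)
    (hx : toR (u.1 + v.1, u.2 + v.2) ∈ secR a b)
    (hna : ¬(0 < dt u a ∧ 0 < dt a v)) (hnb : ¬(0 < dt u b ∧ 0 < dt b v)) :
    secR u v ⊆ secR a b := by
  rw [int_mem_secR hab] at hx
  obtain ⟨hx1, hx2⟩ := hx
  have e1 : dt a (u.1 + v.1, u.2 + v.2) = dt a u + dt a v := by simp [dt]; ring
  have e2 : dt (u.1 + v.1, u.2 + v.2) b = dt u b + dt v b := by simp [dt]; ring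
  rw [e1] at hx1; rw [e2] at hx2
  have hc : 0 < dt a v * dt u b - dt a u * dt v b := by
    have : dt a v * dt u b - dt a u * dt v b = dt a b * dt u v := by
      simp only [dt]; ring
    rw [this]; positivity
  have h3 : 0 ≤ dt a u ∨ dt a v ≤ 0 := by
    by_contra hcon
    push_neg at hcon
    exact hna ⟨by rw [dt_swap] at hcon ⊢; omega, by omega⟩
  have h4 : dt u b ≤ 0 ∨ 0 ≤ dt v b := by
    by_contra hcon
    push_neg at hcon
    exact hnb ⟨by omega, by rw [dt_swap] at hcon ⊢; omega⟩
  obtain ⟨hp, hq, hr, hs⟩ := pqrs_core hc hx1 hx2 h3 h4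
  exact secR_sub_of_inside hab hp hr hq hs

/-- if no ray of the second fan is strictly inside a sector, the sector is
contained in a sector of the second fan -/
lemma exists_fan2_sector {d₂ : ℕ} {v₂ : ℕ → ℤ × ℤ} (h₂ : IsCompleteFan d₂ v₂)
    {u v : ℤ × ℤ} (huv : 0 < dt u v)
    (hno : ∀ t < d₂, ¬(0 < dt u (v₂ t) ∧ 0 < dt (v₂ t) v)) :
    ∃ t < d₂, secR u v ⊆ secR (v₂ t) (v₂ (t+1)) := by
  obtain ⟨hd1, hcyc, hcop, hdet, hcov⟩ := h₂
  have hx : toR (u.1 + v.1, u.2 + v.2) ∈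
      ⋃ i ∈ Finset.range d₂, secR (v₂ i) (v₂ (i+1)) := by
    rw [hcov]; trivial
  simp only [Set.mem_iUnion, Finset.mem_range] at hx
  obtain ⟨t, ht, hxt⟩ := hx
  have hab : 0 < dt (v₂ t) (v₂ (t+1)) := hdet t ht
  refine ⟨t, ht, sector_in_sector huv hab hxt (hno t ht) ?_⟩
  rcases Nat.lt_or_ge (t+1) d₂ with h | h
  · exact hno (t+1) h
  · have : t + 1 = d₂ := by omega
    rw [this, hcyc]
    exact hno 0 (by omega)

/-- main chain lemma: regular chain subdividing a sector, each piece inside a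
sector of the second fan -/
lemma chainlem {d₂ : ℕ} {v₂ : ℕ → ℤ × ℤ} (h₂ : IsCompleteFan d₂ v₂) :
    ∀ n : ℕ, ∀ u v : ℤ × ℤ, IsCoprime u.1 u.2 → IsCoprime v.1 v.2 → 0 < dt u v →
    ((Finset.range d₂).filter (fun t => 0 < dt u (v₂ t) ∧ 0 < dt (v₂ t) v)).card = n →
    ∃ (m : ℕ) (c : ℕ → ℤ × ℤ), 1 ≤ m ∧ c 0 = u ∧ c m = v ∧
      (∀ j < m, dt (c j) (c (j+1)) = 1 ∧ secR (c j) (c (j+1)) ⊆ secR u v ∧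
        ∃ t < d₂, secR (c j) (c (j+1)) ⊆ secR (v₂ t) (v₂ (t+1))) ∧
      secR u v ⊆ ⋃ j ∈ Finset.range m, secR (c j) (c (j+1)) := by
  intro n
  induction n using Nat.strong_induction_on with
  | _ n ih =>
    intro u v hu hv huv hcard
    rcases Nat.eq_zero_or_pos n with h0 | hpos
    · -- no ray of fan 2 strictly inside : use regular subdivision
      subst h0
      have hno : ∀ t < d₂, ¬(0 < dt u (v₂ t) ∧ 0 < dt (v₂ t) v) := by
        intro t ht hcon
        have : t ∈ (Finset.range d₂).filter
            (fun t => 0 < dt u (v₂ t) ∧ 0 < dt (v₂ t) v) := by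
          simp only [Finset.mem_filter, Finset.mem_range]
          exact ⟨ht, hcon⟩
        rw [Finset.card_eq_zero] at hcard
        simp [hcard] at this
      obtain ⟨t, ht, hsub⟩ := exists_fan2_sector h₂ huv hno
      obtain ⟨m, c, hm, hc0, hcm, hedge, hcov⟩ :=
        regchain (dt u v).toNat u v hu hv (by omega) (by omega)
      refine ⟨m, c, hm, hc0, hcm, ?_, hcov⟩
      intro j hj
      obtain ⟨hd, hs⟩ := hedge j hj
      exact ⟨hd, hs, t, ht, hs.trans hsub⟩
    · -- some ray of fan 2 strictly inside : split there
      have hne : ((Finset.range d₂).filter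
          (fun t => 0 < dt u (v₂ t) ∧ 0 < dt (v₂ t) v)).Nonempty := by
        rw [← Finset.card_pos, hcard]; exact hpos
      obtain ⟨t₀, ht₀⟩ := hne
      simp only [Finset.mem_filter, Finset.mem_range] at ht₀
      obtain ⟨ht₀d, hua, hav⟩ := ht₀
      set a := v₂ t₀ with ha
      have hacop : IsCoprime a.1 a.2 := h₂.2.2.1 t₀ (le_of_lt ht₀d)
      -- the two halves have strictly smaller filters
      have hsub1 : ((Finset.range d₂).filter
          (fun t => 0 < dt u (v₂ t) ∧ 0 < dt (v₂ t) a)).card < n := by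
        rw [← hcard]
        apply Finset.card_lt_card
        constructor
        · intro t htm
          simp only [Finset.mem_filter, Finset.mem_range] at htm ⊢
          exact ⟨htm.1, htm.2.1, inside_left huv hua hav htm.2.1 htm.2.2⟩
        · intro hcon
          have hmem : t₀ ∈ (Finset.range d₂).filter
              (fun t => 0 < dt u (v₂ t) ∧ 0 < dt (v₂ t) v) := by
            simp only [Finset.mem_filter, Finset.mem_range]
            exact ⟨ht₀d, hua, hav⟩
          have h' := hcon hmem
          simp only [Finset.mem_filter, Finset.mem_range] at h'
          have h'' := h'.2.2
          rw [← ha, dt_self] at h''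
          omega
      have hsub2 : ((Finset.range d₂).filter
          (fun t => 0 < dt a (v₂ t) ∧ 0 < dt (v₂ t) v)).card < n := by
        rw [← hcard]
        apply Finset.card_lt_card
        constructor
        · intro t htm
          simp only [Finset.mem_filter, Finset.mem_range] at htm ⊢
          exact ⟨htm.1, inside_right huv hua hav htm.2.1 htm.2.2, htm.2.2⟩
        · intro hcon
          have hmem : t₀ ∈ (Finset.range d₂).filter
              (fun t => 0 < dt u (v₂ t) ∧ 0 < dt (v₂ t) v) := by
            simp only [Finset.mem_filter, Finset.mem_range]
            exact ⟨ht₀d, hua, hav⟩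
          have h' := hcon hmem
          simp only [Finset.mem_filter, Finset.mem_range] at h'
          have h'' := h'.2.1
          rw [← ha, dt_self] at h''
          omega
      obtain ⟨m₁, c₁, hm₁, hc₁0, hc₁m, he₁, hcov₁⟩ :=
        ih _ hsub1 u a hu hacop hua rfl
      obtain ⟨m₂, c₂, hm₂, hc₂0, hc₂m, he₂, hcov₂⟩ :=
        ih _ hsub2 a v hacop hv hav rfl
      have hbd : c₁ m₁ = c₂ 0 := by rw [hc₁m, hc₂0]
      have hsua : secR u a ⊆ secR u v :=
        secR_sub_of_inside huv (by rw [dt_self]) huv.le hua.le hav.le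
      have hsav : secR a v ⊆ secR u v :=
        secR_sub_of_inside huv hua.le hav.le huv.le (by rw [dt_self])
      refine ⟨m₁ + m₂, cc m₁ c₁ c₂, by omega, ?_, ?_, ?_, ?_⟩
      · have h01 : (0:ℕ) < m₁ := hm₁
        simp only [cc, if_pos h01, hc₁0]
      · have : ¬ (m₁ + m₂ < m₁) := by omega
        simp only [cc, if_neg this, Nat.add_sub_cancel_left, hc₂m]
      · refine cc_edges (Q := fun x y => dt x y = 1 ∧ secR x y ⊆ secR u v ∧
          ∃ t < d₂, secR x y ⊆ secR (v₂ t) (v₂ (t+1))) hbd ?_ ?_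
        · intro j hj
          obtain ⟨hd, hs, hf⟩ := he₁ j hj
          exact ⟨hd, hs.trans hsua, hf⟩
        · intro j hj
          obtain ⟨hd, hs, hf⟩ := he₂ j hj
          exact ⟨hd, hs.trans hsav, hf⟩
      · intro x hx
        rcases secR_split hua hav huv hx with h | h
        · exact cc_union_left (m₂ := m₂) hbd (hcov₁ h)
        · exact cc_union_right (m₁ := m₁) (hcov₂ h)

/-- assembly: build the global chain along the first fan -/
lemma bigchain {d₁ : ℕ} {v₁ : ℕ → ℤ × ℤ} {d₂ : ℕ} {v₂ : ℕ → ℤ × ℤ}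
    (h₁ : IsCompleteFan d₁ v₁) (h₂ : IsCompleteFan d₂ v₂) :
    ∀ k ≤ d₁, ∃ (M : ℕ) (c : ℕ → ℤ × ℤ), k ≤ M ∧ c 0 = v₁ 0 ∧ c M = v₁ k ∧
      (∀ j < M, dt (c j) (c (j+1)) = 1 ∧
        (∃ i < d₁, secR (c j) (c (j+1)) ⊆ secR (v₁ i) (v₁ (i+1))) ∧
        (∃ t < d₂, secR (c j) (c (j+1)) ⊆ secR (v₂ t) (v₂ (t+1)))) ∧
      (⋃ i ∈ Finset.range k, secR (v₁ i) (v₁ (i+1))) ⊆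
        ⋃ j ∈ Finset.range M, secR (c j) (c (j+1)) := by
  intro k
  induction k with
  | zero =>
    intro _
    exact ⟨0, fun _ => v₁ 0, le_refl 0, rfl, rfl, by omega, by simp⟩
  | succ k ihk =>
    intro hk1
    obtain ⟨M, c, hkM, hc0, hcM, hedge, hcov⟩ := ihk (by omega)
    have hkd : k < d₁ := hk1
    obtain ⟨m, c', hm, hc'0, hc'm, hedge', hcov'⟩ :=
      chainlem h₂ _ (v₁ k) (v₁ (k+1)) (h₁.2.2.1 k (by omega)) (h₁.2.2.1 (k+1) hk1)
        (h₁.2.2.2.1 k hkd) rfl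
    have hbd : c M = c' 0 := by rw [hcM, hc'0]
    refine ⟨M + m, cc M c c', by omega, ?_, ?_, ?_, ?_⟩
    · rcases Nat.eq_zero_or_pos M with h | h
      · subst h
        simp only [cc, Nat.zero_add]
        have : ¬ ((0:ℕ) < 0) := by omega
        simp only [if_neg this, Nat.sub_zero, hc'0, ← hcM, hc0]
      · simp only [cc, if_pos h, hc0]
    · have : ¬ (M + m < M) := by omega
      simp only [cc, if_neg this, Nat.add_sub_cancel_left, hc'm]
    · refine cc_edges (Q := fun x y => dt x y = 1 ∧
        (∃ i < d₁, secR x y ⊆ secR (v₁ i) (v₁ (i+1))) ∧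
        (∃ t < d₂, secR x y ⊆ secR (v₂ t) (v₂ (t+1)))) hbd hedge ?_
      intro j hj
      obtain ⟨hd, hs, hf⟩ := hedge' j hj
      exact ⟨hd, ⟨k, hkd, hs⟩, hf⟩
    · intro x hx
      simp only [Set.mem_iUnion, Finset.mem_range] at hx
      obtain ⟨i, hi, hxi⟩ := hx
      rcases Nat.lt_or_ge i k with h | h
      · refine cc_union_left (m₂ := m) hbd (hcov ?_)
        simp only [Set.mem_iUnion, Finset.mem_range]
        exact ⟨i, h, hxi⟩
      · have : i = k := by omega
        subst this
        exact cc_union_right (m₁ := M) (hcov' hxi)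


/-- any two complete fans have a common refinement, which may be chosen
regular (all consecutive determinants equal to 1). -/
theorem stmt17 (d₁ : ℕ) (v₁ : ℕ → ℤ × ℤ) (d₂ : ℕ) (v₂ : ℕ → ℤ × ℤ)
    (h₁ : IsCompleteFan d₁ v₁) (h₂ : IsCompleteFan d₂ v₂) :
    ∃ (d : ℕ) (v : ℕ → ℤ × ℤ), IsCompleteFan d v ∧
      (∀ i < d, (v i).1 * (v (i+1)).2 - (v i).2 * (v (i+1)).1 = 1) ∧
      FanRefines d v d₁ v₁ ∧ FanRefines d v d₂ v₂ := by
  obtain ⟨M, c, hdM, hc0, hcM, hedge, hcov⟩ := bigchain h₁ h₂ d₁ (le_refl d₁)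
  have hM1 : 1 ≤ M := le_trans h₁.1 hdM
  refine ⟨M, c, ⟨hM1, ?_, ?_, ?_, ?_⟩, ?_, ?_, ?_⟩
  · rw [hcM, h₁.2.1, ← hc0]
  · intro i hi
    rcases Nat.lt_or_ge i M with h | h
    · exact coprime_of_dt_one (hedge i h).1
    · have : i = M := by omega
      subst this
      rw [hcM, h₁.2.1, ← hc0]
      exact coprime_of_dt_one (hedge 0 hM1).1
  · intro i hi
    have hd := (hedge i hi).1
    simp only [dt] at hd
    omega
  · refine Set.Subset.antisymm (Set.subset_univ _) ?_
    rw [← h₁.2.2.2.2]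
    exact hcov
  · intro i hi
    have hd := (hedge i hi).1
    simp only [dt] at hd
    omega
  · intro i hi
    exact (hedge i hi).2.1
  · intro i hi
    exact (hedge i hi).2.2
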